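/- Let T be a bounded linear operator on a nonzero complex Hilbert space H and let f, g ∈ H with T*g = 0. If λ ∈ ℂ satisfies λ ∉ σ_l(T) and λ ≠ ⟨f,g⟩, then λ is not an eigenvalue of T + f⊗g. -/
import Mathlib


open scoped InnerProductSpace

/-- The rank one operator `f ⊗ g` given by `(f ⊗ g) h = ⟨h, g⟩ f`, where the inner
product is linear in the first argument (i.e. `⟪g, h⟫_ℂ • f` in Mathlib's convention). -/
noncomputable def rankOne {H : Type*} [NormedAddCommGroup H] [InnerProductSpace ℂ H]
    (f g : H) : H →L[ℂ] H := (innerSL ℂ g).smulRight f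

/-- The left spectrum of a bounded operator. -/
def leftSpectrum {H : Type*} [NormedAddCommGroup H] [InnerProductSpace ℂ H]
    (T : H →L[ℂ] H) : Set ℂ :=
  {l : ℂ | ¬ ∃ L : H →L[ℂ] H, L ∘L (T - l • (1 : H →L[ℂ] H)) = 1}

/-- The point spectrum (set of eigenvalues) of a bounded operator. -/
def pointSpectrum {H : Type*} [NormedAddCommGroup H] [InnerProductSpace ℂ H]
    (T : H →L[ℂ] H) : Set ℂ :=
  {l : ℂ | ∃ h : H, h ≠ 0 ∧ T h = l • h}

theorem not_eigenvalue_of_rankOne_perturbation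
    {H : Type*} [NormedAddCommGroup H] [InnerProductSpace ℂ H] [CompleteSpace H]
    [Nontrivial H] (T : H →L[ℂ] H) (f g : H)
    (hg : ContinuousLinearMap.adjoint T g = 0) (lam : ℂ)
    (hlam : lam ∉ leftSpectrum T) (hlam' : lam ≠ ⟪g, f⟫_ℂ) :
    lam ∉ pointSpectrum (T + rankOne f g) := by
  rintro ⟨h, hh, heq⟩
  obtain ⟨L, hL⟩ := not_not.mp hlam
  have heq' : T h + ⟪g, h⟫_ℂ • f = lam • h := by
    simpa [rankOne, ContinuousLinearMap.add_apply] using heq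
  have hTh : T h = lam • h - ⟪g, h⟫_ℂ • f := by
    rw [← heq']; abel
  have hgTh : ⟪g, T h⟫_ℂ = 0 := by
    rw [← ContinuousLinearMap.adjoint_inner_left, hg, inner_zero_left]
  have hgh : ⟪g, h⟫_ℂ = 0 := by
    rw [hTh, inner_sub_right, inner_smul_right, inner_smul_right] at hgTh
    have : ⟪g, h⟫_ℂ * (lam - ⟪g, f⟫_ℂ) = 0 := by ring_nf; ring_nf at hgTh; linear_combination hgTh
    rcases mul_eq_zero.mp this with h0 | h0
    · exact h0
    · exact absurd (sub_eq_zero.mp h0) hlam'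
  have hker : (T - lam • (1 : H →L[ℂ] H)) h = 0 := by
    simp [ContinuousLinearMap.sub_apply, hTh, hgh]
  have : h = 0 := by
    have h1 := congrArg (fun A : H →L[ℂ] H => A h) hL
    simp only [ContinuousLinearMap.comp_apply, ContinuousLinearMap.one_apply] at h1
    rw [hker, map_zero] at h1
    exact h1.symm
  exact hh this
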